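/- Let G be a finite connected simple graph with minimal degree at least 2 that is not a cycle graph, and let e be an edge of G such that G - e is connected. Then there is a cycle of G containing e whose length is strictly less than the number of edges of G. -/

import Mathlib

open SimpleGraph Walk List

/-- Splitting the count of edges of a walk containing `x` according to the two dart endpoints. -/
private lemma dart_countP_le {V : Type*} [DecidableEq V] {G : SimpleGraph V} (x : V) :
    ∀ (l : List G.Dart),
      l.countP (fun d => decide (x ∈ d.edge)) ≤
        l.countP (fun d => d.fst == x) + l.countP (fun d => d.snd == x) := by
  intro l
  induction l with
  | nil => simp
  | cons d l ih =>
    simp only [List.countP_cons]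
    have hmem : (decide (x ∈ d.edge) = true) ↔ (d.fst = x ∨ d.snd = x) := by
      rw [decide_eq_true_eq, SimpleGraph.Dart.edge, Sym2.mem_iff]
      constructor
      · rintro (h | h) <;> [left; right] <;> exact h.symm
      · rintro (h | h) <;> [left; right] <;> exact h.symm
    by_cases h : x ∈ d.edge
    · rcases hmem.mp (by simpa using h) with h1 | h1 <;> simp [h, h1] <;> omega
    · have h1 : ¬ d.fst = x ∧ ¬ d.snd = x := by
        by_contra hc
        push_neg at hc
        exact h (by rcases Decidable.em (d.fst = x) with h2 | h2 <;>
          [exact Sym2.mem_iff.mpr (Or.inl h2.symm); exact Sym2.mem_iff.mpr (Or.inr (hc h2).symm)])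
      simp [h, h1.1, h1.2]
      omega

/-- Any vertex is incident to at most 2 edges of a cycle. -/
private lemma cycle_countP_le {V : Type*} [DecidableEq V] {G : SimpleGraph V} {u : V}
    {c : G.Walk u u} (hc : c.IsCycle) (x : V) :
    c.edges.countP (fun f => decide (x ∈ f)) ≤ 2 := by
  have hedges : c.edges = c.darts.map SimpleGraph.Dart.edge := rfl
  have h1 : c.edges.countP (fun f => decide (x ∈ f)) =
      c.darts.countP (fun d => decide (x ∈ d.edge)) := by
    rw [hedges, List.countP_map]; rfl
  have h2 : c.darts.countP (fun d => d.fst == x) = c.support.dropLast.count x := by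
    rw [← c.map_fst_darts, List.count, List.countP_map]; rfl
  have h3 : c.darts.countP (fun d => d.snd == x) = c.support.tail.count x := by
    rw [← c.map_snd_darts, List.count, List.countP_map]; rfl
  -- count in the tail is at most 1 since the cycle support tail has no duplicates
  have htail : c.support.tail.count x ≤ 1 :=
    List.nodup_iff_count_le_one.mp hc.2 x
  -- count in dropLast equals count in tail
  have hne : c.support ≠ [] := c.support_ne_nil
  have hlast : c.support.getLast hne = u := c.getLast_support
  have hsplit : c.support.dropLast ++ [u] = c.support := by
    conv_rhs => rw [← List.dropLast_append_getLast hne]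
    rw [hlast]
  have hcons : c.support = u :: c.support.tail := c.support_eq_cons
  have hcount : c.support.dropLast.count x + [u].count x
      = [u].count x + c.support.tail.count x := by
    rw [← List.count_append, hsplit]
    conv_lhs => rw [hcons]
    rw [List.count_cons]
    simp [List.count_singleton]
    omega
  have hdrop : c.support.dropLast.count x = c.support.tail.count x := by omega
  calc c.edges.countP (fun f => decide (x ∈ f))
      ≤ c.darts.countP (fun d => d.fst == x) + c.darts.countP (fun d => d.snd == x) := by
        rw [h1]; exact dart_countP_le x c.darts
    _ ≤ 2 := by rw [h2, h3, hdrop]; omega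

/-- a finite connected simple graph `G` with minimal degree at least 2 that is
not a cycle graph (i.e. not connected 2-regular), with an edge `e` such that `G - e` is
connected, has a cycle through `e` of length strictly smaller than the number of edges. -/
theorem exists_short_cycle_through_edge {V : Type*} [Fintype V] [DecidableEq V]
    (G : SimpleGraph V) [DecidableRel G.Adj]
    (hconn : G.Connected) (hdeg : ∀ v, 2 ≤ G.degree v)
    (hnotcycle : ¬ (G.Connected ∧ G.IsRegularOfDegree 2))
    (e : Sym2 V) (he : e ∈ G.edgeSet)
    (hdel : (G.deleteEdges {e}).Connected) :
    ∃ (v : V) (c : G.Walk v v), c.IsCycle ∧ e ∈ c.edges ∧ c.length < G.edgeFinset.card := by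
  induction e using Sym2.inductionOn with
  | hf a b =>
  have hab : G.Adj a b := he
  -- path in G - e from b to a
  obtain ⟨q'⟩ := hdel.preconnected b a
  let q'' := q'.toPath
  have hq''path : (q'' : (G.deleteEdges {s(a,b)}).Walk b a).IsPath := q''.2
  have hsub : ∀ f ∈ (q'' : (G.deleteEdges {s(a,b)}).Walk b a).edges, f ∈ G.edgeSet := by
    intro f hf
    have := Walk.edges_subset_edgeSet _ hf
    rw [SimpleGraph.edgeSet_deleteEdges] at this
    exact this.1
  let q : G.Walk b a := (q'' : (G.deleteEdges {s(a,b)}).Walk b a).transfer G hsub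
  have hqpath : q.IsPath := hq''path.transfer hsub
  have hqe : s(a,b) ∉ q.edges := by
    intro hmem
    rw [Walk.edges_transfer] at hmem
    have := Walk.edges_subset_edgeSet _ hmem
    rw [SimpleGraph.edgeSet_deleteEdges] at this
    exact this.2 rfl
  -- the cycle
  let c : G.Walk a a := Walk.cons hab q
  have hcyc : c.IsCycle := by
    rw [Walk.cons_isCycle_iff]
    exact ⟨hqpath, hqe⟩
  refine ⟨a, c, hcyc, by simp [c], ?_⟩
  -- length bound
  have hnodup : c.edges.Nodup := hcyc.isTrail.edges_nodup
  have hlen : c.length = c.edges.toFinset.card := by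
    rw [List.toFinset_card_of_nodup hnodup, Walk.length_edges]
  have hsubset : c.edges.toFinset ⊆ G.edgeFinset := by
    intro f hf
    rw [List.mem_toFinset] at hf
    exact SimpleGraph.mem_edgeFinset.mpr (Walk.edges_subset_edgeSet _ hf)
  -- find a vertex of degree ≥ 3
  have hnotreg : ¬ G.IsRegularOfDegree 2 := fun h => hnotcycle ⟨hconn, h⟩
  rw [SimpleGraph.IsRegularOfDegree] at hnotreg
  push_neg at hnotreg
  obtain ⟨w, hw⟩ := hnotreg
  have hw3 : 3 ≤ G.degree w := by have := hdeg w; omega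
  -- some edge incident to w is not in c
  have hmiss : ∃ f ∈ G.edgeFinset, f ∉ c.edges.toFinset := by
    by_contra hall
    push_neg at hall
    have hincsub : G.incidenceFinset w ⊆ c.edges.toFinset.filter (fun f => w ∈ f) := by
      intro f hf
      rw [SimpleGraph.mem_incidenceFinset, SimpleGraph.incidenceSet] at hf
      refine Finset.mem_filter.mpr ⟨hall f (SimpleGraph.mem_edgeFinset.mpr hf.1), hf.2⟩
    have hcard1 : 3 ≤ (c.edges.toFinset.filter (fun f => w ∈ f)).card := by
      calc 3 ≤ G.degree w := hw3
        _ = (G.incidenceFinset w).card := (G.card_incidenceFinset_eq_degree w).symm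
        _ ≤ _ := Finset.card_le_card hincsub
    have hcard2 : (c.edges.toFinset.filter (fun f => w ∈ f)).card ≤ 2 := by
      have h1 : c.edges.toFinset.filter (fun f => w ∈ f) = (c.edges.filter (fun f => w ∈ f)).toFinset := by
        rw [List.toFinset_filter]
        simp
      have h2 : (c.edges.filter (fun f => w ∈ f)).toFinset.card ≤ (c.edges.filter (fun f => w ∈ f)).length :=
        List.toFinset_card_le _
      rw [h1]
      calc (c.edges.filter (fun f => w ∈ f)).toFinset.card
          ≤ (c.edges.filter (fun f => w ∈ f)).length := h2
        _ = c.edges.countP (fun f => decide (w ∈ f)) := List.countP_eq_length_filter.symm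
        _ ≤ 2 := cycle_countP_le hcyc w
    omega
  obtain ⟨f, hf1, hf2⟩ := hmiss
  have hss : c.edges.toFinset ⊂ G.edgeFinset :=
    ⟨hsubset, fun h => hf2 (h hf1)⟩
  rw [hlen]
  exact Finset.card_lt_card hss
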